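/- Let B̃₀, B̃_* ∈ ℝ^{d×(k−1)} have orthonormal columns and let B_{*'} be as constructed: B_{*'} = (1/‖w̄‖²) B_* w̄ w̄ᵀ + (2 B̃₀ B̃₀ᵀ B̃_* − B̃_*) Ṽ_*ᵀ, with all orthogonality conditions as before. Then dist(B_*, B_{*'}) = 2 ‖(I_d − B̃_* B̃_*ᵀ) B̃₀ B̃₀ᵀ B̃_*‖₂ ≥ 2 dist(B̃₀, B̃_*) √(1 − dist(B̃₀, B̃_*)²). -/

import Mathlib

set_option maxHeartbeats 1000000

open Matrix BigOperators

noncomputable def specNorm {m n : ℕ} (A : Matrix (Fin m) (Fin n) ℝ) : ℝ :=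
  sSup {r : ℝ | ∃ v : Fin n → ℝ, ∑ i, v i ^ 2 = 1 ∧ r = Real.sqrt (∑ i, (A.mulVec v) i ^ 2)}

noncomputable def sMin {m n : ℕ} (A : Matrix (Fin m) (Fin n) ℝ) : ℝ :=
  sInf {r : ℝ | ∃ v : Fin n → ℝ, ∑ i, v i ^ 2 = 1 ∧ r = Real.sqrt (∑ i, (A.mulVec v) i ^ 2)}

def sphSet {m n : ℕ} (A : Matrix (Fin m) (Fin n) ℝ) : Set ℝ :=
  {r : ℝ | ∃ v : Fin n → ℝ, ∑ i, v i ^ 2 = 1 ∧ r = Real.sqrt (∑ i, (A.mulVec v) i ^ 2)}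

lemma specNorm_eq {m n : ℕ} (A : Matrix (Fin m) (Fin n) ℝ) : specNorm A = sSup (sphSet A) := rfl

lemma sumSq_eq_dot {n : ℕ} (v : Fin n → ℝ) : ∑ i, v i ^ 2 = v ⬝ᵥ v := by
  simp [dotProduct, sq]

lemma sumSq_mulVec {m n : ℕ} (A : Matrix (Fin m) (Fin n) ℝ) (v : Fin n → ℝ) :
    ∑ i, (A.mulVec v) i ^ 2 = v ⬝ᵥ (Aᵀ * A).mulVec v := by
  rw [sumSq_eq_dot, ← Matrix.mulVec_mulVec, Matrix.dotProduct_mulVec (A := Aᵀ), Matrix.vecMul_transpose]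

lemma mem_sphSet {m n : ℕ} (A : Matrix (Fin m) (Fin n) ℝ) {v : Fin n → ℝ}
    (hv : ∑ i, v i ^ 2 = 1) : Real.sqrt (∑ i, (A.mulVec v) i ^ 2) ∈ sphSet A :=
  ⟨v, hv, rfl⟩

lemma sphSet_nonneg {m n : ℕ} (A : Matrix (Fin m) (Fin n) ℝ) :
    ∀ r ∈ sphSet A, 0 ≤ r := by
  rintro r ⟨v, hv, rfl⟩; exact Real.sqrt_nonneg _

lemma specNorm_nonneg {m n : ℕ} (A : Matrix (Fin m) (Fin n) ℝ) : 0 ≤ specNorm A :=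
  Real.sSup_nonneg (sphSet_nonneg A)

lemma bddAbove_sphSet {m n : ℕ} (A : Matrix (Fin m) (Fin n) ℝ) :
    BddAbove (sphSet A) := by
  refine ⟨Real.sqrt (∑ i, (∑ j, |A i j|) ^ 2), ?_⟩
  rintro r ⟨v, hv, rfl⟩
  apply Real.sqrt_le_sqrt
  apply Finset.sum_le_sum
  intro i _
  have hvj : ∀ j, |v j| ≤ 1 := by
    intro j
    have h1 : v j ^ 2 ≤ 1 := by
      rw [← hv]
      exact Finset.single_le_sum (f := fun j => v j ^ 2) (fun j _ => sq_nonneg _) (Finset.mem_univ j)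
    nlinarith [abs_nonneg (v j), sq_abs (v j)]
  have h2 : |(A.mulVec v) i| ≤ ∑ j, |A i j| := by
    calc |(A.mulVec v) i| = |∑ j, A i j * v j| := rfl
    _ ≤ ∑ j, |A i j * v j| := Finset.abs_sum_le_sum_abs _ _
    _ ≤ ∑ j, |A i j| := by
        apply Finset.sum_le_sum
        intro j _
        rw [abs_mul]
        nlinarith [abs_nonneg (A i j), hvj j, abs_nonneg (v j)]
  calc (A.mulVec v) i ^ 2 = |(A.mulVec v) i| ^ 2 := (sq_abs _).symm
  _ ≤ (∑ j, |A i j|) ^ 2 := by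
      apply sq_le_sq'
      · linarith [abs_nonneg ((A.mulVec v) i)]
      · exact h2

lemma le_specNorm {m n : ℕ} (A : Matrix (Fin m) (Fin n) ℝ) {v : Fin n → ℝ}
    (hv : ∑ i, v i ^ 2 = 1) : Real.sqrt (∑ i, (A.mulVec v) i ^ 2) ≤ specNorm A :=
  le_csSup (bddAbove_sphSet A) (mem_sphSet A hv)

lemma sqrt_quad {m n : ℕ} (A : Matrix (Fin m) (Fin n) ℝ) (v : Fin n → ℝ) :
    Real.sqrt (∑ i, (A.mulVec v) i ^ 2) = Real.sqrt (v ⬝ᵥ (Aᵀ * A).mulVec v) := by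
  rw [sumSq_mulVec]

lemma specNorm_eq_of_gram {m m' n : ℕ} (A : Matrix (Fin m) (Fin n) ℝ)
    (B : Matrix (Fin m') (Fin n) ℝ) (h : Aᵀ * A = Bᵀ * B) : specNorm A = specNorm B := by
  rw [specNorm_eq, specNorm_eq]
  congr 1
  ext r
  constructor
  · rintro ⟨v, hv, rfl⟩
    exact ⟨v, hv, by rw [sqrt_quad, sqrt_quad, h]⟩
  · rintro ⟨v, hv, rfl⟩
    exact ⟨v, hv, by rw [sqrt_quad, sqrt_quad, h]⟩

lemma specNorm_eq_two_mul {m m' n : ℕ} (A : Matrix (Fin m) (Fin n) ℝ)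
    (B : Matrix (Fin m') (Fin n) ℝ) (h : Aᵀ * A = (4:ℝ) • (Bᵀ * B)) :
    specNorm A = 2 * specNorm B := by
  have hset : sphSet A = (fun r => 2 * r) '' sphSet B := by
    ext r
    constructor
    · rintro ⟨v, hv, rfl⟩
      refine ⟨Real.sqrt (∑ i, (B.mulVec v) i ^ 2), ⟨v, hv, rfl⟩, ?_⟩
      rw [sqrt_quad, sqrt_quad, h]
      have : v ⬝ᵥ ((4:ℝ) • (Bᵀ * B)).mulVec v = 4 * (v ⬝ᵥ (Bᵀ * B).mulVec v) := by
        rw [Matrix.smul_mulVec, dotProduct_smul]; simp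
      rw [this]
      rw [show (4:ℝ) = 2^2 by norm_num, Real.sqrt_mul (by positivity), Real.sqrt_sq (by norm_num)]
    · rintro ⟨r', ⟨v, hv, rfl⟩, rfl⟩
      refine ⟨v, hv, ?_⟩
      rw [sqrt_quad, sqrt_quad, h]
      have : v ⬝ᵥ ((4:ℝ) • (Bᵀ * B)).mulVec v = 4 * (v ⬝ᵥ (Bᵀ * B).mulVec v) := by
        rw [Matrix.smul_mulVec, dotProduct_smul]; simp
      rw [this]
      rw [show (4:ℝ) = 2^2 by norm_num, Real.sqrt_mul (by positivity), Real.sqrt_sq (by norm_num)]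
  rw [specNorm_eq, specNorm_eq, hset]
  rcases (sphSet B).eq_empty_or_nonempty with he | hne
  · rw [he]; simp [Real.sSup_empty]
  · apply le_antisymm
    · apply csSup_le (hne.image _)
      rintro r ⟨x, hx, rfl⟩
      have := le_csSup (bddAbove_sphSet B) hx
      simp only []
      linarith
    · have h2 : sSup (sphSet B) ≤ sSup ((fun r => 2 * r) '' sphSet B) / 2 := by
        apply csSup_le hne
        intro x hx
        have hmem : 2 * x ∈ (fun r => 2 * r) '' sphSet B := ⟨x, hx, rfl⟩
        have hbdd : BddAbove ((fun r => 2 * r) '' sphSet B) := by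
          obtain ⟨M, hM⟩ := bddAbove_sphSet B
          exact ⟨2 * M, by rintro y ⟨z, hz, rfl⟩; have := hM hz; simp only []; linarith⟩
        have := le_csSup hbdd hmem
        linarith
      linarith

lemma unit_exists {p : ℕ} (hp : 0 < p) : ∃ v : Fin p → ℝ, ∑ i, v i ^ 2 = 1 := by
  refine ⟨fun i => if i = ⟨0, hp⟩ then 1 else 0, ?_⟩
  rw [Finset.sum_eq_single ⟨0, hp⟩]
  · simp
  · intro b _ hb; simp [hb]
  · simp

lemma sphSet_nonempty {m n : ℕ} (hn : 0 < n) (A : Matrix (Fin m) (Fin n) ℝ) :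
    (sphSet A).Nonempty := by
  obtain ⟨v, hv⟩ := unit_exists hn
  exact ⟨_, mem_sphSet A hv⟩

lemma dot_V_mulVec {p n : ℕ} (V : Matrix (Fin p) (Fin n) ℝ) (v : Fin p → ℝ) (w : Fin n → ℝ) :
    v ⬝ᵥ V.mulVec w = (Vᵀ.mulVec v) ⬝ᵥ w := by
  rw [Matrix.dotProduct_mulVec]
  congr 1
  rw [← Matrix.vecMul_transpose, Matrix.transpose_transpose]

lemma specNorm_mul_orth {m n p : ℕ} (A : Matrix (Fin m) (Fin n) ℝ)
    (V : Matrix (Fin p) (Fin n) ℝ) (hV : Vᵀ * V = 1) (hp : 0 < p) :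
    specNorm (A * Vᵀ) = specNorm A := by
  apply le_antisymm
  · rw [specNorm_eq (A * Vᵀ)]
    apply csSup_le (sphSet_nonempty hp _)
    rintro r ⟨v, hv, rfl⟩
    set w := Vᵀ.mulVec v with hw
    have hAV : (A * Vᵀ).mulVec v = A.mulVec w := by rw [← Matrix.mulVec_mulVec]
    have hww : w ⬝ᵥ w ≤ 1 := by
      have hx : (0:ℝ) ≤ (v - V.mulVec w) ⬝ᵥ (v - V.mulVec w) := by
        rw [← sumSq_eq_dot]; positivity
      have e1 : v ⬝ᵥ V.mulVec w = w ⬝ᵥ w := by rw [dot_V_mulVec]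
      have e2 : (V.mulVec w) ⬝ᵥ v = w ⬝ᵥ w := by
        rw [dotProduct_comm, dot_V_mulVec]
      have e3 : (V.mulVec w) ⬝ᵥ (V.mulVec w) = w ⬝ᵥ w := by
        rw [dot_V_mulVec, Matrix.mulVec_mulVec, hV, Matrix.one_mulVec]
      have e4 : v ⬝ᵥ v = 1 := by rw [← sumSq_eq_dot, hv]
      rw [sub_dotProduct, dotProduct_sub, dotProduct_sub, e1, e2, e3, e4] at hx
      linarith
    have hww0 : (0:ℝ) ≤ w ⬝ᵥ w := by rw [← sumSq_eq_dot]; positivity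
    rcases eq_or_lt_of_le hww0 with hz | hpos
    · have hwz : w = 0 := by
        rwa [eq_comm, dotProduct_self_eq_zero] at hz
      rw [hAV, hwz]
      simp [Matrix.mulVec_zero]
      exact specNorm_nonneg A
    · set c := Real.sqrt (w ⬝ᵥ w) with hc
      have hcpos : 0 < c := Real.sqrt_pos.mpr hpos
      have hc1 : c ≤ 1 := by
        rw [hc, show (1:ℝ) = Real.sqrt 1 by simp]
        exact Real.sqrt_le_sqrt hww
      set u := c⁻¹ • w with hu
      have hc2 : c * c = w ⬝ᵥ w := Real.mul_self_sqrt hww0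
      have hu1 : ∑ i, u i ^ 2 = 1 := by
        rw [sumSq_eq_dot, hu, smul_dotProduct, dotProduct_smul, smul_eq_mul,
          smul_eq_mul, ← mul_assoc, ← hc2]
        field_simp
      have hval : Real.sqrt (∑ i, ((A * Vᵀ).mulVec v) i ^ 2)
          = c * Real.sqrt (∑ i, (A.mulVec u) i ^ 2) := by
        have hwu : w = c • u := by
          rw [hu, smul_smul, mul_inv_cancel₀ hcpos.ne', one_smul]
        rw [hAV, hwu, Matrix.mulVec_smul]
        have : ∀ i, ((c • A.mulVec u) i) ^ 2 = c ^ 2 * (A.mulVec u i) ^ 2 := by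
          intro i; simp [Pi.smul_apply, smul_eq_mul]; ring
        rw [Finset.sum_congr rfl (fun i _ => this i), ← Finset.mul_sum,
          Real.sqrt_mul (by positivity), Real.sqrt_sq hcpos.le]
      rw [hval]
      have hle := le_specNorm A hu1
      have hnn : 0 ≤ Real.sqrt (∑ i, (A.mulVec u) i ^ 2) := Real.sqrt_nonneg _
      nlinarith [specNorm_nonneg A]
  · rcases Nat.eq_zero_or_pos n with hn | hn
    · subst hn
      have : sphSet A = ∅ := by
        ext r; simp only [sphSet, Set.mem_setOf_eq, Set.mem_empty_iff_false, iff_false]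
        rintro ⟨v, hv, -⟩
        simp at hv
      rw [specNorm_eq A, this, Real.sSup_empty]
      exact specNorm_nonneg _
    · rw [specNorm_eq A]
      apply csSup_le (sphSet_nonempty hn A)
      rintro r ⟨w, hw, rfl⟩
      set v := V.mulVec w with hv
      have hv1 : ∑ i, v i ^ 2 = 1 := by
        rw [sumSq_eq_dot, hv, dot_V_mulVec, Matrix.mulVec_mulVec, hV, Matrix.one_mulVec,
          ← sumSq_eq_dot, hw]
      have heq : (A * Vᵀ).mulVec v = A.mulVec w := by
        rw [hv, Matrix.mulVec_mulVec, Matrix.mul_assoc, hV, Matrix.mul_one]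
      have := le_specNorm (A * Vᵀ) hv1
      rw [heq] at this
      exact this



section vmv
variable {l m n : ℕ}

lemma mul_vecMulVec (M : Matrix (Fin l) (Fin m) ℝ) (a : Fin m → ℝ) (b : Fin n → ℝ) :
    M * vecMulVec a b = vecMulVec (M.mulVec a) b := by
  ext i k
  simp [Matrix.mul_apply, Matrix.vecMulVec_apply, Matrix.mulVec, dotProduct,
    Finset.sum_mul, mul_assoc]

lemma vecMulVec_mul (a : Fin l → ℝ) (b : Fin m → ℝ) (M : Matrix (Fin m) (Fin n) ℝ) :
    vecMulVec a b * M = vecMulVec a (Mᵀ.mulVec b) := by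
  ext i k
  simp only [Matrix.mul_apply, Matrix.vecMulVec_apply, Matrix.mulVec, dotProduct,
    Finset.mul_sum, Matrix.transpose_apply]
  apply Finset.sum_congr rfl
  intro j _
  ring

lemma vecMulVec_mul_vecMulVec (a : Fin l → ℝ) (b c : Fin m → ℝ) (e : Fin n → ℝ) :
    vecMulVec a b * vecMulVec c e = (b ⬝ᵥ c) • vecMulVec a e := by
  ext i k
  simp only [Matrix.mul_apply, Matrix.vecMulVec_apply, dotProduct, Matrix.smul_apply,
    Finset.sum_mul, smul_eq_mul, Finset.mul_sum]
  apply Finset.sum_congr rfl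
  intro j _
  ring

lemma transpose_vecMulVec (a : Fin l → ℝ) (b : Fin m → ℝ) :
    (vecMulVec a b)ᵀ = vecMulVec b a := by
  ext i k
  simp [Matrix.vecMulVec_apply, mul_comm]

lemma vecMulVec_zero_right (a : Fin l → ℝ) :
    vecMulVec a (0 : Fin m → ℝ) = 0 := by
  ext i k; simp [Matrix.vecMulVec_apply]

lemma vecMulVec_zero_left (b : Fin m → ℝ) :
    vecMulVec (0 : Fin l → ℝ) b = 0 := by
  ext i k; simp [Matrix.vecMulVec_apply]

lemma vecMulVec_mulVec (a : Fin l → ℝ) (b c : Fin m → ℝ) :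
    (vecMulVec a b).mulVec c = (b ⬝ᵥ c) • a := by
  ext i
  simp only [Matrix.mulVec, Matrix.vecMulVec_apply, dotProduct, Pi.smul_apply,
    smul_eq_mul, Finset.sum_mul, Finset.mul_sum]
  apply Finset.sum_congr rfl
  intro j _
  ring

lemma vecMulVec_smul_left (c : ℝ) (a : Fin l → ℝ) (b : Fin m → ℝ) :
    vecMulVec (c • a) b = c • vecMulVec a b := by
  ext i k; simp [Matrix.vecMulVec_apply]; ring

end vmv
lemma sq_bound (x y : ℝ) (hx : 0 ≤ x) (h : Real.sqrt x ≤ y) : x ≤ y^2 := by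
  nlinarith [Real.sq_sqrt hx, Real.sqrt_nonneg x]

lemma scalar_key (m ε ep a b c : ℝ) (hm0 : 0 ≤ m) (hm1 : m ≤ 1) (hε : 0 < ε)
    (hEdef : ep = ε * m / 8)
    (hma : m ≤ a) (haub : a < m + ep)
    (J1 : m * ((1 + m) * ((1 + m) * 1 - a) - ((1 + m) * a - b))
        ≤ (1 + m) * ((1 + m) * a - b) - ((1 + m) * b - c))
    (J2 : c - m * b - m * (b - m * a) ≤ b - m * a - m * (a - m * 1))
    (J3 : m * (b - m * a - m * (a - m * 1)) ≤ c - m * b - m * (b - m * a))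
    (hdp : 0 ≤ b - m * a - m * (a - m * 1)) :
    (m*(1-m) - ε)*a ≤ b - c := by
  have he2nn : (0:ℝ) ≤ b - 2*m*a + m^2 := by linarith
  have he1nn : (0:ℝ) ≤ a - m := by linarith
  have he1ub : a - m < ep := by linarith
  have hfact1 : (0:ℝ) ≤ (a - m) - 2*(b - 2*m*a + m^2) + (c - 3*m*b + 3*m^2*a - m^3) := by
    linarith [J1]
  have hfact2 : c - 3*m*b + 3*m^2*a - m^3 ≤ (1 - m) * (b - 2*m*a + m^2) := by
    linarith [J2]
  have hfact3 : (0:ℝ) ≤ c - 3*m*b + 3*m^2*a - m^3 := by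
    linarith [J3]
  have hme2 : m * (b - 2*m*a + m^2) ≤ b - 2*m*a + m^2 := by
    nlinarith [he2nn, hm0, hm1]
  have he3e2 : c - 3*m*b + 3*m^2*a - m^3 ≤ b - 2*m*a + m^2 := by
    nlinarith [hfact2, he2nn, hm0]
  have he2e1 : b - 2*m*a + m^2 ≤ a - m := by linarith [hfact1, he3e2]
  have p1 : (0:ℝ) ≤ m*(a-m) := mul_nonneg hm0 he1nn
  have p2 : m^2*(a-m) ≤ ep := by nlinarith [he1nn, he1ub, hm0, hm1, sq_nonneg m]
  have p3 : ε*m ≤ ε*a := by nlinarith [hε, he1nn]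
  have p4 : 8*ep = ε*m := by rw [hEdef]; ring
  have p5 : m*(b-2*m*a+m^2) ≤ ep := by nlinarith [hme2, he2e1, he1ub]
  have p6 : c-3*m*b+3*m^2*a-m^3 ≤ ep := by linarith [he3e2, he2e1, he1ub]
  linarith [p1, p2, p3, p4, p5, p6, he2nn, hfact3]

lemma specNorm_of_zero_cols {m n : ℕ} (hn : n = 0) (A : Matrix (Fin m) (Fin n) ℝ) :
    specNorm A = 0 := by
  rw [specNorm_eq]
  have : sphSet A = ∅ := by
    ext r
    simp only [sphSet, Set.mem_setOf_eq, Set.mem_empty_iff_false, iff_false]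
    rintro ⟨v, hv, -⟩
    subst hn
    simp at hv
  rw [this, Real.sSup_empty]

theorem stmt13 {d k : ℕ} (hk : 0 < k)
    (Bstar : Matrix (Fin d) (Fin k) ℝ) (hBstar : Bstarᵀ * Bstar = 1)
    (wbar : Fin k → ℝ) (hw : wbar ≠ 0)
    (Bt0 Bts : Matrix (Fin d) (Fin (k - 1)) ℝ) (Vts : Matrix (Fin k) (Fin (k - 1)) ℝ)
    (hBts : Btsᵀ * Bts = 1) (hBtsw : Btsᵀ.mulVec (Bstar.mulVec wbar) = 0)
    (hVts : Vtsᵀ * Vts = 1) (hVtsw : Vtsᵀ.mulVec wbar = 0)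
    (hBt0 : Bt0ᵀ * Bt0 = 1) (hBt0w : Bt0ᵀ.mulVec (Bstar.mulVec wbar) = 0)
    (hdecomp : Bstar = (∑ i, wbar i ^ 2)⁻¹ • vecMulVec (Bstar.mulVec wbar) wbar + Bts * Vtsᵀ)
    (Bsp : Matrix (Fin d) (Fin k) ℝ)
    (hBsp : Bsp = (∑ i, wbar i ^ 2)⁻¹ • vecMulVec (Bstar.mulVec wbar) wbar
        + ((2 : ℝ) • (Bt0 * Bt0ᵀ * Bts) - Bts) * Vtsᵀ) :
    specNorm ((1 - Bsp * Bspᵀ) * Bstar)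
        = 2 * specNorm ((1 - Bts * Btsᵀ) * (Bt0 * (Bt0ᵀ * Bts))) ∧
    2 * specNorm ((1 - Bts * Btsᵀ) * (Bt0 * (Bt0ᵀ * Bts)))
        ≥ 2 * specNorm ((1 - Bts * Btsᵀ) * Bt0) *
            Real.sqrt (1 - specNorm ((1 - Bts * Btsᵀ) * Bt0) ^ 2) := by
  constructor
  · -- Part 1
    have hL : (1 - Bsp * Bspᵀ) * Bstar
        = (Bts - ((2:ℝ) • (Bt0 * Bt0ᵀ * Bts) - Bts) * ((2:ℝ) • ((Bt0ᵀ * Bts)ᵀ * (Bt0ᵀ * Bts)) - 1)) * Vtsᵀ := by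
      have red0 : ∀ {q : ℕ} (C : Matrix (Fin (k-1)) (Fin q) ℝ), Bt0ᵀ * (Bt0 * C) = C := by
        intro q C; rw [← Matrix.mul_assoc, hBt0, Matrix.one_mul]
      have reds : ∀ {q : ℕ} (C : Matrix (Fin (k-1)) (Fin q) ℝ), Btsᵀ * (Bts * C) = C := by
        intro q C; rw [← Matrix.mul_assoc, hBts, Matrix.one_mul]
      have redv : ∀ {q : ℕ} (C : Matrix (Fin (k-1)) (Fin q) ℝ), Vtsᵀ * (Vts * C) = C := by
        intro q C; rw [← Matrix.mul_assoc, hVts, Matrix.one_mul]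
      set s := ∑ i, wbar i ^ 2 with hsdef
      set u := Bstar.mulVec wbar with hudef
      have hwws : wbar ⬝ᵥ wbar = s := by simp [dotProduct, hsdef, sq]
      have hs : 0 < s := by
        rcases Function.ne_iff.mp hw with ⟨j, hj⟩
        have h1 : ∀ i, 0 ≤ wbar i ^ 2 := fun i => sq_nonneg _
        have hj' : wbar j ≠ 0 := by simpa using hj
        have : 0 < wbar j ^ 2 := lt_of_le_of_ne (sq_nonneg _) (Ne.symm (pow_ne_zero 2 hj'))
        exact Finset.sum_pos' (fun i _ => h1 i) ⟨j, Finset.mem_univ j, this⟩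
      have huus : u ⬝ᵥ u = s := by
        rw [hudef, dot_V_mulVec, Matrix.mulVec_mulVec, hBstar, Matrix.one_mulVec, hwws]
      have hinv : s⁻¹ * s = 1 := inv_mul_cancel₀ hs.ne'
      rw [hBsp]
      nth_rewrite 1 [hdecomp]
      simp only [Matrix.transpose_add, Matrix.transpose_sub, Matrix.transpose_smul,
        Matrix.transpose_mul, Matrix.transpose_one, Matrix.transpose_transpose,
        _root_.transpose_vecMulVec, Matrix.mul_add, Matrix.add_mul, Matrix.sub_mul, Matrix.mul_sub,
        Matrix.smul_mul, Matrix.mul_smul, Matrix.mul_assoc, Matrix.one_mul, Matrix.mul_one,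
        _root_.mul_vecMulVec, _root_.vecMulVec_mul, _root_.vecMulVec_mul_vecMulVec, ← Matrix.mulVec_mulVec,
        hBtsw, hBt0w, hVtsw, Matrix.mulVec_zero, vecMulVec_zero_right, huus, hwws,
        Matrix.mul_zero, Matrix.zero_mul, smul_zero, red0, reds, redv,
        vecMulVec_zero_left, _root_.vecMulVec_mulVec, vecMulVec_smul_left, Matrix.mulVec_smul,
        Matrix.smul_mulVec, Matrix.zero_mulVec,
        smul_smul, hinv, mul_one, one_smul, add_zero, zero_add, sub_zero, zero_sub, smul_zero]
      match_scalars <;> field_simp <;> ring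
    have red0 : ∀ {q : ℕ} (C : Matrix (Fin (k-1)) (Fin q) ℝ), Bt0ᵀ * (Bt0 * C) = C := by
      intro q C; rw [← Matrix.mul_assoc, hBt0, Matrix.one_mul]
    have reds : ∀ {q : ℕ} (C : Matrix (Fin (k-1)) (Fin q) ℝ), Btsᵀ * (Bts * C) = C := by
      intro q C; rw [← Matrix.mul_assoc, hBts, Matrix.one_mul]
    have hGram : (Bts - ((2:ℝ) • (Bt0 * Bt0ᵀ * Bts) - Bts) * ((2:ℝ) • ((Bt0ᵀ * Bts)ᵀ * (Bt0ᵀ * Bts)) - 1))ᵀ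
        * (Bts - ((2:ℝ) • (Bt0 * Bt0ᵀ * Bts) - Bts) * ((2:ℝ) • ((Bt0ᵀ * Bts)ᵀ * (Bt0ᵀ * Bts)) - 1))
        = (4:ℝ) • (((1 - Bts * Btsᵀ) * (Bt0 * (Bt0ᵀ * Bts)))ᵀ
          * ((1 - Bts * Btsᵀ) * (Bt0 * (Bt0ᵀ * Bts)))) := by
      simp only [Matrix.transpose_sub, Matrix.transpose_mul, Matrix.transpose_smul,
        Matrix.transpose_one, Matrix.transpose_transpose, Matrix.sub_mul, Matrix.mul_sub,
        Matrix.smul_mul, Matrix.mul_smul, Matrix.mul_one, Matrix.one_mul,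
        Matrix.mul_assoc, red0, reds, hBt0, hBts, smul_smul, smul_sub, smul_add]
      module
    rw [hL, specNorm_mul_orth _ Vts hVts hk, specNorm_eq_two_mul _ _ hGram]
  · -- Part 2
    rcases Nat.lt_or_ge k 2 with hklt | hk2
    · have hk1 : k - 1 = 0 := by omega
      rw [specNorm_of_zero_cols hk1, specNorm_of_zero_cols hk1]
      norm_num
    ·
      have hn : 0 < k - 1 := by omega
      have red0 : ∀ {q : ℕ} (C : Matrix (Fin (k-1)) (Fin q) ℝ), Bt0ᵀ * (Bt0 * C) = C := by
        intro q C; rw [← Matrix.mul_assoc, hBt0, Matrix.one_mul]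
      have reds : ∀ {q : ℕ} (C : Matrix (Fin (k-1)) (Fin q) ℝ), Btsᵀ * (Bts * C) = C := by
        intro q C; rw [← Matrix.mul_assoc, hBts, Matrix.one_mul]
      set A0 := (1 - Bts * Btsᵀ) * Bt0 with hA0
      set R0 := (1 - Bts * Btsᵀ) * (Bt0 * (Bt0ᵀ * Bts)) with hR0
      set G := Bt0ᵀ * Bts with hG
      set F := G * Gᵀ with hF
      have hA0gram : A0ᵀ * A0 = 1 - F := by
        rw [hA0, hF, hG]
        simp only [Matrix.transpose_sub, Matrix.transpose_mul, Matrix.transpose_one,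
          Matrix.transpose_transpose, Matrix.sub_mul, Matrix.mul_sub, Matrix.mul_one,
          Matrix.one_mul, Matrix.mul_assoc, red0, reds, hBt0, hBts]
        module
      have hR0gram : R0ᵀ * R0 = Gᵀ * ((1 - F) * G) := by
        rw [hR0, hF, hG]
        simp only [Matrix.transpose_sub, Matrix.transpose_mul, Matrix.transpose_one,
          Matrix.transpose_transpose, Matrix.sub_mul, Matrix.mul_sub, Matrix.mul_one,
          Matrix.one_mul, Matrix.mul_assoc, red0, reds, hBt0, hBts]
        module
      -- quadratic form facts
      have hFsym : Fᵀ = F := by rw [hF, Matrix.transpose_mul, Matrix.transpose_transpose]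
      have hFdot : ∀ x y : Fin (k-1) → ℝ, x ⬝ᵥ F.mulVec y = (F.mulVec x) ⬝ᵥ y := by
        intro x y
        rw [dot_V_mulVec, hFsym]
      have pF0 : ∀ x : Fin (k-1) → ℝ, 0 ≤ x ⬝ᵥ F.mulVec x := by
        intro x
        rw [hF, ← Matrix.mulVec_mulVec, dot_V_mulVec, ← sumSq_eq_dot]
        positivity
      have pF1 : ∀ x : Fin (k-1) → ℝ, x ⬝ᵥ F.mulVec x ≤ x ⬝ᵥ x := by
        intro x
        have h0 : 0 ≤ x ⬝ᵥ (A0ᵀ * A0).mulVec x := by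
          rw [← sumSq_mulVec]; positivity
        rw [hA0gram, Matrix.sub_mulVec, Matrix.one_mulVec, dotProduct_sub] at h0
        linarith
      -- infimum
      set Sq : Set ℝ := {r : ℝ | ∃ v : Fin (k-1) → ℝ, ∑ i, v i ^ 2 = 1 ∧ r = v ⬝ᵥ F.mulVec v}
        with hSq
      have hSqne : Sq.Nonempty := by
        obtain ⟨v, hv⟩ := unit_exists hn
        exact ⟨_, v, hv, rfl⟩
      have hSqlb : ∀ r ∈ Sq, 0 ≤ r := by rintro r ⟨v, hv, rfl⟩; exact pF0 v
      have hSqbdd : BddBelow Sq := ⟨0, hSqlb⟩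
      set m := sInf Sq with hm
      have hm0 : 0 ≤ m := le_csInf hSqne hSqlb
      have hm1 : m ≤ 1 := by
        obtain ⟨r, v, hv, hr⟩ := hSqne
        have h1 : r ≤ 1 := by
          rw [hr]
          have := pF1 v
          rw [← sumSq_eq_dot, hv] at this
          linarith
        exact le_trans (csInf_le hSqbdd ⟨v, hv, hr⟩) h1
      -- value of quadratic form for A0
      have hA0val : ∀ v : Fin (k-1) → ℝ, ∑ i, (A0.mulVec v) i ^ 2 = v ⬝ᵥ v - v ⬝ᵥ F.mulVec v := by
        intro v
        rw [sumSq_mulVec, hA0gram, Matrix.sub_mulVec, Matrix.one_mulVec, dotProduct_sub]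
      have hs2 : specNorm A0 ^ 2 = 1 - m := by
        have hub : specNorm A0 ≤ Real.sqrt (1 - m) := by
          rw [specNorm_eq]
          apply csSup_le (sphSet_nonempty hn A0)
          rintro r ⟨v, hv, rfl⟩
          apply Real.sqrt_le_sqrt
          rw [hA0val, ← sumSq_eq_dot, hv]
          have : m ≤ v ⬝ᵥ F.mulVec v := csInf_le hSqbdd ⟨v, hv, rfl⟩
          linarith
        have hub2 : specNorm A0 ^ 2 ≤ 1 - m := by
          have h1 : specNorm A0 ^ 2 ≤ Real.sqrt (1 - m) ^ 2 := by
            have := specNorm_nonneg A0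
            nlinarith
          rwa [Real.sq_sqrt (by linarith : (0:ℝ) ≤ 1 - m)] at h1
        have hlb : 1 - m ≤ specNorm A0 ^ 2 := by
          apply le_of_forall_pos_le_add
          intro ε hε
          obtain ⟨r, ⟨v, hv, hr⟩, hrlt⟩ := exists_lt_of_csInf_lt hSqne
            (show sInf Sq < m + ε by rw [← hm]; linarith)
          have h1 : Real.sqrt (∑ i, (A0.mulVec v) i ^ 2) ≤ specNorm A0 := le_specNorm A0 hv
          have h2 : ∑ i, (A0.mulVec v) i ^ 2 = 1 - r := by
            rw [hA0val, ← sumSq_eq_dot, hv, hr]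
          have h3 : 0 ≤ 1 - r := by
            have := pF1 v
            rw [← sumSq_eq_dot, hv] at this
            rw [hr]; linarith
          rw [h2] at h1
          have h4 : 1 - r ≤ specNorm A0 ^ 2 := by
            have h5 := Real.sq_sqrt h3
            nlinarith [Real.sqrt_nonneg (1 - r), h1]
          linarith
        linarith
      have hsA0 : specNorm A0 = Real.sqrt (1 - m) := by
        rw [← hs2, Real.sqrt_sq (specNorm_nonneg A0)]
      have dps : ∀ x : Fin (k-1) → ℝ, 0 ≤ x ⬝ᵥ x := by
        intro x; rw [← sumSq_eq_dot]; positivity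
      have pK0 : ∀ x : Fin (k-1) → ℝ, m * (x ⬝ᵥ x) ≤ x ⬝ᵥ F.mulVec x := by
        intro x
        rcases eq_or_lt_of_le (dps x) with hxz | hxp
        · have hx0 : x = 0 := by rwa [eq_comm, dotProduct_self_eq_zero] at hxz
          rw [hx0]
          simp
        · set c0 := Real.sqrt (x ⬝ᵥ x) with hc0
          have hc0p : 0 < c0 := Real.sqrt_pos.mpr hxp
          have hc0sq : c0 * c0 = x ⬝ᵥ x := Real.mul_self_sqrt (dps x)
          have hunit : ∑ i, (c0⁻¹ • x) i ^ 2 = 1 := by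
            rw [sumSq_eq_dot, smul_dotProduct, dotProduct_smul, smul_eq_mul,
              smul_eq_mul, ← mul_assoc, ← hc0sq]
            field_simp
          have hmem : (c0⁻¹ • x) ⬝ᵥ F.mulVec (c0⁻¹ • x) ∈ Sq := ⟨_, hunit, rfl⟩
          have hle := csInf_le hSqbdd hmem
          rw [Matrix.mulVec_smul, smul_dotProduct, dotProduct_smul, smul_eq_mul,
            smul_eq_mul, ← mul_assoc] at hle
          rw [← hm] at hle
          have h2 : m * (c0 * c0) ≤ c0⁻¹ * c0⁻¹ * (x ⬝ᵥ F.mulVec x) * (c0 * c0) := by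
            apply mul_le_mul_of_nonneg_right hle (by positivity)
          have h3 : c0⁻¹ * c0⁻¹ * (x ⬝ᵥ F.mulVec x) * (c0 * c0) = x ⬝ᵥ F.mulVec x := by
            field_simp
          rw [h3, hc0sq] at h2
          exact h2
      have hkey : m * (1 - m) ≤ specNorm R0 ^ 2 := by
        apply le_of_forall_pos_le_add
        intro ε hε
        rcases eq_or_lt_of_le hm0 with hmz | hmp
        · rw [← hmz]
          nlinarith [sq_nonneg (specNorm R0)]
        · set ε' := ε * m / 8 with hE
          have hE'p : 0 < ε' := by rw [hE]; positivity
          obtain ⟨r, ⟨v, hv, hr⟩, hrlt⟩ := exists_lt_of_csInf_lt hSqne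
            (show sInf Sq < m + ε' by rw [← hm]; linarith)
          have hvv : v ⬝ᵥ v = 1 := by rw [← sumSq_eq_dot, hv]
          have hma : m ≤ v ⬝ᵥ F.mulVec v := csInf_le hSqbdd ⟨v, hv, rfl⟩
          have haub : v ⬝ᵥ F.mulVec v < m + ε' := by rw [← hr]; exact hrlt
          have hC1 : (F.mulVec v) ⬝ᵥ v = v ⬝ᵥ (F.mulVec v) := dotProduct_comm _ _
          have hC2 : v ⬝ᵥ (F.mulVec (F.mulVec v)) = (F.mulVec v) ⬝ᵥ (F.mulVec v) := hFdot v _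
          have hC3 : (F.mulVec (F.mulVec v)) ⬝ᵥ v = (F.mulVec v) ⬝ᵥ (F.mulVec v) := by
            rw [dotProduct_comm, hC2]
          have hC4 : (F.mulVec (F.mulVec v)) ⬝ᵥ (F.mulVec v)
              = (F.mulVec v) ⬝ᵥ (F.mulVec (F.mulVec v)) := dotProduct_comm _ _
          have J1 := pK0 ((1 + m) • v - F.mulVec v)
          have J2 := pF1 (F.mulVec v - m • v)
          have J3 := pK0 (F.mulVec v - m • v)
          have J4 := pF1 (F.mulVec v)
          simp only [Matrix.mulVec_sub, Matrix.mulVec_smul, sub_dotProduct,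
            dotProduct_sub, smul_dotProduct, dotProduct_smul,
            smul_eq_mul, hC1, hC2, hC3, hC4, hvv] at J1 J2 J3 J4
          have hdp := dps (F.mulVec v - m • v)
          simp only [sub_dotProduct, dotProduct_sub, smul_dotProduct,
            dotProduct_smul, smul_eq_mul, hC1, hvv] at hdp
          set a := v ⬝ᵥ F.mulVec v with hadef
          set b := (F.mulVec v) ⬝ᵥ (F.mulVec v) with hbdef
          set c := (F.mulVec v) ⬝ᵥ (F.mulVec (F.mulVec v)) with hcdef
          clear_value a b c
          have key : (m*(1-m) - ε)*a ≤ b - c :=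
            scalar_key m ε ε' a b c hm0 hm1 hε hE hma haub J1 J2 J3 hdp
          have hapos : 0 < a := lt_of_lt_of_le hmp hma
          have hbc : c ≤ b := J4
          set c0 := Real.sqrt a with hc0
          have hc0p : 0 < c0 := Real.sqrt_pos.mpr hapos
          have hc0sq : c0 * c0 = a := Real.mul_self_sqrt hapos.le
          have hu0dot : (Gᵀ.mulVec v) ⬝ᵥ (Gᵀ.mulVec v) = a := by
            rw [dot_V_mulVec, Matrix.transpose_transpose, Matrix.mulVec_mulVec, ← hF, hC1]
          set w := c0⁻¹ • (Gᵀ.mulVec v) with hwdef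
          have hw1 : ∑ i, w i ^ 2 = 1 := by
            rw [sumSq_eq_dot, hwdef, smul_dotProduct, dotProduct_smul,
              smul_eq_mul, smul_eq_mul, hu0dot, ← hc0sq]
            field_simp
          have hGw : G.mulVec w = c0⁻¹ • (F.mulVec v) := by
            rw [hwdef, Matrix.mulVec_smul, Matrix.mulVec_mulVec, ← hF]
          have hval : ∑ i, (R0.mulVec w) i ^ 2 = c0⁻¹ * (c0⁻¹ * (b - c)) := by
            rw [sumSq_mulVec, hR0gram, ← Matrix.mulVec_mulVec, ← Matrix.mulVec_mulVec,
              dot_V_mulVec, Matrix.transpose_transpose, hGw, Matrix.mulVec_smul,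
              smul_dotProduct, dotProduct_smul, Matrix.sub_mulVec,
              Matrix.one_mulVec, dotProduct_sub, smul_eq_mul, smul_eq_mul,
              ← hbdef, ← hcdef]
          have hsn := le_specNorm R0 hw1
          rw [hval] at hsn
          have hratio : c0⁻¹ * (c0⁻¹ * (b - c)) = (b-c)/a := by
            rw [← hc0sq]
            field_simp
          rw [hratio] at hsn
          have h0bc : 0 ≤ (b-c)/a := div_nonneg (by linarith) hapos.le
          have hsq : (b-c)/a ≤ specNorm R0 ^ 2 := sq_bound _ _ h0bc hsn
          have hdiv : m*(1-m) - ε ≤ (b-c)/a := (le_div_iff₀ hapos).mpr key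
          linarith
      have hkey2 : Real.sqrt (m*(1-m)) ≤ specNorm R0 := by
        have h1 := Real.sqrt_le_sqrt hkey
        rwa [Real.sqrt_sq (specNorm_nonneg R0)] at h1
      rw [ge_iff_le, hsA0, Real.sq_sqrt (by linarith : (0:ℝ) ≤ 1 - m)]
      have hmm : (1:ℝ) - (1 - m) = m := by ring
      rw [hmm]
      have hsplit : Real.sqrt (1-m) * Real.sqrt m = Real.sqrt (m*(1-m)) := by
        rw [← Real.sqrt_mul (by linarith : (0:ℝ) ≤ 1-m), mul_comm]
      calc 2 * Real.sqrt (1-m) * Real.sqrt m = 2 * (Real.sqrt (1-m) * Real.sqrt m) := by ring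
        _ = 2 * Real.sqrt (m*(1-m)) := by rw [hsplit]
        _ ≤ 2 * specNorm R0 := by linarith [hkey2]
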